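/- Suppose in addition that F is nondecreasing with F(0) ≥ 0, that b* ∈ (0, b̂] satisfies I(b*) − I'(b*)·φ(b*)/φ'(b*) = ψ(b*)/ψ'(b*) − φ(b*)/φ'(b*), and define V : (0,∞) → ℝ by V(x) = ψ(x)/ψ'(b*) for 0 < x ≤ b* and V(x) = I(x) + ((1 − I'(b*))/φ'(b*))·φ(x) for x ≥ b*. Then V satisfies the Hamilton–Jacobi–Bellman equation: for every x ∈ (0, b*) ∪ (b*, ∞), (σ²/2)·V''(x) + μ·V'(x) − q·V(x) + F(x)·max(1 − V'(x), 0) = 0; moreover V'(x) ≥ 1 for x ∈ (0, b*) and V'(x) ≤ 1 for x ∈ (b*, ∞). -/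

import Mathlib

private lemma aux_d1 (Cc A B x : ℝ) :
    HasDerivAt (fun y => Cc * Real.exp (-(A*y)) * Real.sinh (B*y))
      (Cc * Real.exp (-(A*x)) * (B * Real.cosh (B*x) - A * Real.sinh (B*x))) x := by
  have he : HasDerivAt (fun y : ℝ => Cc * Real.exp (-(A*y)))
      (Cc * (Real.exp (-(A*x)) * (-A))) x := by
    have h0 : HasDerivAt (fun y : ℝ => -(A*y)) (-A) x := by
      simpa using ((hasDerivAt_id x).const_mul A).fun_neg
    exact (h0.exp).const_mul Cc
  have hs : HasDerivAt (fun y : ℝ => Real.sinh (B*y)) (Real.cosh (B*x) * B) x := by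
    have h0 : HasDerivAt (fun y : ℝ => B*y) B x := by
      simpa using (hasDerivAt_id x).const_mul B
    exact h0.sinh
  refine (he.fun_mul hs).congr_deriv ?_
  ring

private lemma aux_d2 (Cc A B x : ℝ) :
    HasDerivAt (fun y => Cc * Real.exp (-(A*y)) * (B * Real.cosh (B*y) - A * Real.sinh (B*y)))
      (Cc * Real.exp (-(A*x)) * ((A^2+B^2) * Real.sinh (B*x) - 2*A*B * Real.cosh (B*x))) x := by
  have he : HasDerivAt (fun y : ℝ => Cc * Real.exp (-(A*y)))
      (Cc * (Real.exp (-(A*x)) * (-A))) x := by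
    have h0 : HasDerivAt (fun y : ℝ => -(A*y)) (-A) x := by
      simpa using ((hasDerivAt_id x).const_mul A).fun_neg
    exact (h0.exp).const_mul Cc
  have h0 : HasDerivAt (fun y : ℝ => B*y) B x := by
    simpa using (hasDerivAt_id x).const_mul B
  have hg : HasDerivAt (fun y : ℝ => B * Real.cosh (B*y) - A * Real.sinh (B*y))
      (B * (Real.sinh (B*x) * B) - A * (Real.cosh (B*x) * B)) x :=
    ((h0.cosh).const_mul B).sub ((h0.sinh).const_mul A)
  refine (he.fun_mul hg).congr_deriv ?_
  ring

set_option maxHeartbeats 1000000 in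
/-- with F nondecreasing and F(0) ≥ 0, if b* ∈ (0, b̂] satisfies the
first-order condition, the piecewise function V satisfies the HJB equation
(σ²/2)V'' + μV' − qV + F·max(1 − V', 0) = 0 on (0,b*) ∪ (b*,∞); moreover V' ≥ 1 on
(0,b*) and V' ≤ 1 on (b*,∞). -/
theorem stmt_13 (μ σ q : ℝ) (hμ : 0 < μ) (hσ : 0 < σ) (hq : 0 < q)
    (Δ : ℝ) (hΔ : Δ = Real.sqrt (μ ^ 2 + 2 * q * σ ^ 2))
    (ψ : ℝ → ℝ)
    (hψ : ∀ x : ℝ, ψ x =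
      σ ^ 2 / Δ * Real.exp (-(μ / σ ^ 2) * x) * Real.sinh (Δ * x / σ ^ 2))
    (bhat : ℝ) (hbhat_pos : 0 < bhat) (hbhat : deriv (deriv ψ) bhat = 0)
    (hbhat_uniq : ∀ b > (0:ℝ), deriv (deriv ψ) b = 0 → b = bhat)
    (F φ I : ℝ → ℝ)
    (hFmono : MonotoneOn F (Set.Ici 0)) (hF0 : 0 ≤ F 0)
    (hφC : ContDiff ℝ 2 φ) (hφ0 : φ 0 = 1)
    (hφ' : ∀ x ≥ (0:ℝ), deriv φ x < 0)
    (hφ'' : ∀ x ≥ (0:ℝ), 0 < deriv (deriv φ) x)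
    (hφODE : ∀ x > (0:ℝ),
      σ ^ 2 / 2 * deriv (deriv φ) x + (μ - F x) * deriv φ x - q * φ x = 0)
    (hIC : ContDiff ℝ 2 I)
    (hIconc : ∀ x ≥ (0:ℝ), deriv (deriv I) x ≤ 0)
    (hI' : ∀ x ≥ (0:ℝ), 0 ≤ deriv I x ∧ deriv I x ≤ 1)
    (hIODE : ∀ x > (0:ℝ),
      σ ^ 2 / 2 * deriv (deriv I) x + (μ - F x) * deriv I x - q * I x = -F x)
    (bs : ℝ) (hbs_pos : 0 < bs) (hbs_le : bs ≤ bhat)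
    (hbs : I bs - deriv I bs * φ bs / deriv φ bs
      = ψ bs / deriv ψ bs - φ bs / deriv φ bs)
    (V : ℝ → ℝ)
    (hV : ∀ x : ℝ, V x = if x ≤ bs then ψ x / deriv ψ bs
      else I x + (1 - deriv I bs) / deriv φ bs * φ x) :
    (∀ x ∈ Set.Ioo (0:ℝ) bs ∪ Set.Ioi bs,
      σ ^ 2 / 2 * deriv (deriv V) x + μ * deriv V x - q * V x
        + F x * max (1 - deriv V x) 0 = 0) ∧
      (∀ x ∈ Set.Ioo (0:ℝ) bs, 1 ≤ deriv V x) ∧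
      (∀ x ∈ Set.Ioi bs, deriv V x ≤ 1) := by
  have hσ0 : σ ≠ 0 := ne_of_gt hσ
  have hΔpos : 0 < Δ := by
    rw [hΔ]; exact Real.sqrt_pos.mpr (by positivity)
  have hΔ0 : Δ ≠ 0 := ne_of_gt hΔpos
  have hΔsq : Δ^2 = μ^2 + 2*q*σ^2 := by
    rw [hΔ]; exact Real.sq_sqrt (by positivity)
  set A : ℝ := μ/σ^2 with hA
  set B : ℝ := Δ/σ^2 with hB
  set Cc : ℝ := σ^2/Δ with hCc
  clear_value A B Cc
  have hApos : 0 < A := by rw [hA]; positivity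
  have hCpos : 0 < Cc := by rw [hCc]; positivity
  have hμΔ : μ < Δ := by nlinarith [hΔsq, mul_pos hq (pow_pos hσ 2)]
  have hBpos : (0:ℝ) < B := by rw [hB]; positivity
  have hAB : A < B := by
    rw [hA, hB]; gcongr
  -- explicit form of ψ
  have ψeq : ψ = fun y => Cc * Real.exp (-(A*y)) * Real.sinh (B*y) := by
    funext y
    rw [hψ y]
    have h1 : -A * y = -(A*y) := by ring
    have h2 : Δ * y / σ ^ 2 = B*y := by rw [hB]; ring
    rw [h1, h2]
  have hψd : deriv ψ = fun x => Cc * Real.exp (-(A*x)) *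
      (B * Real.cosh (B*x) - A * Real.sinh (B*x)) := by
    funext x
    rw [ψeq]
    exact (aux_d1 Cc A B x).deriv
  have hψdd : deriv (deriv ψ) = fun x => Cc * Real.exp (-(A*x)) *
      ((A^2+B^2) * Real.sinh (B*x) - 2*A*B * Real.cosh (B*x)) := by
    funext x
    rw [hψd]
    exact (aux_d2 Cc A B x).deriv
  -- ψ' > 0 everywhere
  have hψ'pos : ∀ x : ℝ, 0 < deriv ψ x := by
    intro x
    rw [hψd]
    have h1 := Real.cosh_pos (B*x)
    have h2 := Real.cosh_sub_sinh (B*x)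
    have h3 := Real.exp_pos (-(B*x))
    have h4 : 0 < B * Real.cosh (B*x) - A * Real.sinh (B*x) := by nlinarith
    positivity
  -- ψ satisfies the ODE
  have hψODE : ∀ x : ℝ, σ^2/2 * deriv (deriv ψ) x + μ * deriv ψ x - q * ψ x = 0 := by
    intro x
    rw [hψdd, hψd, ψeq]
    simp only
    generalize Real.exp (-(A*x)) = E
    generalize Real.sinh (B*x) = S
    generalize Real.cosh (B*x) = Ch
    rw [hA, hB, hCc]
    field_simp
    linear_combination (E * S) * hΔsq
  -- ψ'' < 0 on (0, bhat)
  have hcont2 : Continuous (deriv (deriv ψ)) := by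
    rw [hψdd]; fun_prop
  have hψ''0 : deriv (deriv ψ) 0 < 0 := by
    rw [hψdd]
    simp only [mul_zero, Real.sinh_zero, Real.cosh_zero, neg_zero, Real.exp_zero]
    nlinarith [mul_pos hCpos (mul_pos hApos hBpos)]
  have hψ''neg : ∀ x : ℝ, 0 < x → x < bhat → deriv (deriv ψ) x < 0 := by
    intro x hx0 hxb
    by_contra h
    push_neg at h
    obtain ⟨z, hz, hz0⟩ := intermediate_value_Icc (le_of_lt hx0)
      (hcont2.continuousOn) (show (0:ℝ) ∈ Set.Icc (deriv (deriv ψ) 0) (deriv (deriv ψ) x)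
        from ⟨le_of_lt hψ''0, h⟩)
    have hzpos : 0 < z := by
      rcases lt_or_eq_of_le hz.1 with h' | h'
      · exact h'
      · exfalso; rw [← h'] at hz0; exact absurd hz0 (ne_of_lt hψ''0)
    have heq := hbhat_uniq z hzpos hz0
    have hlt : z < bhat := lt_of_le_of_lt hz.2 hxb
    exact absurd heq (ne_of_lt hlt)
  -- deriv ψ strictly decreasing on [0, bs]
  have hanti : StrictAntiOn (deriv ψ) (Set.Icc 0 bs) := by
    apply strictAntiOn_of_deriv_neg (convex_Icc 0 bs)
      ((by rw [hψd]; fun_prop : Continuous (deriv ψ)).continuousOn)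
    intro x hx
    rw [interior_Icc] at hx
    exact hψ''neg x hx.1 (lt_of_lt_of_le hx.2 hbs_le)
  set c1 : ℝ := deriv ψ bs with hc1
  clear_value c1
  have hc1pos : 0 < c1 := hc1 ▸ hψ'pos bs
  -- derivatives of V on (-∞, bs)
  have hVeqL : Set.EqOn V (fun y => ψ y / c1) (Set.Iio bs) := by
    intro y hy
    show V y = ψ y / c1
    rw [hV y, if_pos (le_of_lt hy)]
  have hdL : ∀ x ∈ Set.Iio bs, deriv V x = deriv ψ x / c1 := by
    intro x hx
    have h : V =ᶠ[nhds x] fun y => ψ y / c1 :=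
      Filter.eventuallyEq_of_mem (Iio_mem_nhds hx) hVeqL
    rw [h.deriv_eq, deriv_div_const]
  have hddL : ∀ x ∈ Set.Iio bs, deriv (deriv V) x = deriv (deriv ψ) x / c1 := by
    intro x hx
    have h : deriv V =ᶠ[nhds x] fun y => deriv ψ y / c1 :=
      Filter.eventuallyEq_of_mem (Iio_mem_nhds hx) hdL
    rw [h.deriv_eq, deriv_div_const]
  -- V' ≥ 1 on (0, bs)
  have hV1 : ∀ x ∈ Set.Ioo (0:ℝ) bs, 1 ≤ deriv V x := by
    intro x hx
    rw [hdL x hx.2]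
    rw [le_div_iff₀ hc1pos, one_mul, hc1]
    exact le_of_lt (hanti ⟨le_of_lt hx.1, le_of_lt hx.2⟩ ⟨le_of_lt hbs_pos, le_refl bs⟩ hx.2)
  -- right side setup
  set c : ℝ := (1 - deriv I bs) / deriv φ bs with hc
  clear_value c
  have hφbs' : deriv φ bs < 0 := hφ' bs (le_of_lt hbs_pos)
  have hcnonpos : c ≤ 0 := by
    rw [hc]
    apply div_nonpos_of_nonneg_of_nonpos
    · linarith [(hI' bs (le_of_lt hbs_pos)).2]
    · exact le_of_lt hφbs'
  have hIdiff : Differentiable ℝ I := hIC.differentiable (by norm_num)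
  have hφdiff : Differentiable ℝ φ := hφC.differentiable (by norm_num)
  have hIC1 : ContDiff ℝ 1 (deriv I) := by
    have : ContDiff ℝ (1+1) I := by norm_num; exact hIC
    exact (contDiff_succ_iff_deriv.mp this).2.2
  have hφC1 : ContDiff ℝ 1 (deriv φ) := by
    have : ContDiff ℝ (1+1) φ := by norm_num; exact hφC
    exact (contDiff_succ_iff_deriv.mp this).2.2
  have hIdiff' : Differentiable ℝ (deriv I) := hIC1.differentiable (by norm_num)
  have hφdiff' : Differentiable ℝ (deriv φ) := hφC1.differentiable (by norm_num)
  have hVeqR : Set.EqOn V (fun y => I y + c * φ y) (Set.Ioi bs) := by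
    intro y hy
    show V y = I y + c * φ y
    rw [hV y, if_neg (not_le.mpr hy), hc]
  have hdR : ∀ x ∈ Set.Ioi bs, deriv V x = deriv I x + c * deriv φ x := by
    intro x hx
    have h : V =ᶠ[nhds x] fun y => I y + c * φ y :=
      Filter.eventuallyEq_of_mem (Ioi_mem_nhds hx) hVeqR
    rw [h.deriv_eq, deriv_fun_add (hIdiff x) ((hφdiff x).const_mul c),
      deriv_const_mul c (hφdiff x)]
  have hddR : ∀ x ∈ Set.Ioi bs, deriv (deriv V) x
      = deriv (deriv I) x + c * deriv (deriv φ) x := by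
    intro x hx
    have h : deriv V =ᶠ[nhds x] fun y => deriv I y + c * deriv φ y :=
      Filter.eventuallyEq_of_mem (Ioi_mem_nhds hx) hdR
    rw [h.deriv_eq, deriv_fun_add (hIdiff' x) ((hφdiff' x).const_mul c),
      deriv_const_mul c (hφdiff' x)]
  -- W' := I' + cφ' is antitone on [bs, ∞), with value 1 at bs
  have hWanti : AntitoneOn (fun y => deriv I y + c * deriv φ y) (Set.Ici bs) := by
    apply antitoneOn_of_deriv_nonpos (convex_Ici bs)
    · exact ((hIdiff'.continuous).add (continuous_const.mul hφdiff'.continuous)).continuousOn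
    · exact fun x _ => ((hIdiff' x).add ((hφdiff' x).const_mul c)).differentiableWithinAt
    · intro x hx
      rw [interior_Ici] at hx
      have hx0 : (0:ℝ) ≤ x := le_of_lt (lt_trans hbs_pos hx)
      rw [deriv_fun_add (hIdiff' x) ((hφdiff' x).const_mul c),
        deriv_const_mul c (hφdiff' x)]
      have h1 := hIconc x hx0
      have h2 := hφ'' x hx0
      have h3 : c * deriv (deriv φ) x ≤ 0 :=
        mul_nonpos_of_nonpos_of_nonneg hcnonpos (le_of_lt h2)
      linarith
  have hWbs : deriv I bs + c * deriv φ bs = 1 := by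
    rw [hc, div_mul_cancel₀ _ (ne_of_lt hφbs')]
    ring
  -- V' ≤ 1 on (bs, ∞)
  have hV2 : ∀ x ∈ Set.Ioi bs, deriv V x ≤ 1 := by
    intro x hx
    rw [hdR x hx]
    calc deriv I x + c * deriv φ x
        ≤ deriv I bs + c * deriv φ bs :=
          hWanti (Set.self_mem_Ici) (Set.mem_Ici.mpr (le_of_lt hx)) (le_of_lt hx)
      _ = 1 := hWbs
  refine ⟨?_, hV1, hV2⟩
  intro x hx
  rcases hx with hx | hx
  · -- left region
    have hxI : x ∈ Set.Iio bs := hx.2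
    have hVx : V x = ψ x / c1 := by rw [hV x, if_pos (le_of_lt hxI)]
    rw [hdL x hxI, hddL x hxI, hVx]
    have hmax : max (1 - deriv ψ x / c1) 0 = 0 := by
      apply max_eq_right
      have := hV1 x hx
      rw [hdL x hxI] at this
      linarith
    rw [hmax]
    linear_combination (1/c1) * hψODE x
  · -- right region
    have hxpos : 0 < x := lt_trans hbs_pos hx
    have hVx : V x = I x + c * φ x := by rw [hV x, if_neg (not_le.mpr hx), hc]
    rw [hdR x hx, hddR x hx, hVx]
    have hmax : max (1 - (deriv I x + c * deriv φ x)) 0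
        = 1 - (deriv I x + c * deriv φ x) := by
      apply max_eq_left
      have := hV2 x hx
      rw [hdR x hx] at this
      linarith
    rw [hmax]
    linear_combination hIODE x hxpos + c * hφODE x hxpos
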